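/- Let x : ℝ → (Fin n → ℝ) be a solution of the quasi-polynomial system ẋ_i = x_i · Σ_{j=1}^{N} A_{ij} · Π_{k=1}^{n} x_k^{B_{jk}}, with x_i(t) > 0 for all i and t. Let C be an invertible real n×n matrix and define new variables x̃ by x_i = Π_k x̃_k^{C_{ik}} (equivalently x̃_i = Π_k x_k^{(C⁻¹)_{ik}}). Then x̃ satisfies the quasi-polynomial system ẋ̃_i = x̃_i · Σ_{j=1}^{N} Ã_{ij} · Π_k x̃_k^{B̃_{jk}} with Ã = C⁻¹ A and B̃ = B C. -/

import Mathlib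

open Matrix Finset

/-- Covariance of quasi-polynomial systems under quasi-monomial transformations:
if `x` is a positive solution of the QP system with data `(A, B)` and `C` is invertible,
then `x̃ i = ∏ k, x k ^ (C⁻¹ i k)` solves the QP system with data `(C⁻¹ * A, B * C)`. -/
theorem qp_covariance (n N : ℕ) (A : Matrix (Fin n) (Fin N) ℝ)
    (B : Matrix (Fin N) (Fin n) ℝ) (C : Matrix (Fin n) (Fin n) ℝ) (hC : IsUnit C)
    (x : ℝ → Fin n → ℝ) (hpos : ∀ t i, 0 < x t i)
    (hx : ∀ t i, HasDerivAt (fun s => x s i)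
      (x t i * ∑ j, A i j * ∏ k, x t k ^ B j k) t) :
    ∀ t i, HasDerivAt (fun s => ∏ k, x s k ^ (C⁻¹ i k))
      ((∏ k, x t k ^ (C⁻¹ i k)) *
        ∑ j, (C⁻¹ * A) i j * ∏ k, (∏ l, x t l ^ (C⁻¹ k l)) ^ (B * C) j k) t := by
  intro t i
  have hCC : C * C⁻¹ = 1 := Matrix.mul_nonsing_inv C ((Matrix.isUnit_iff_isUnit_det C).mp hC)
  have hd : HasDerivAt (fun s => ∏ k, x s k ^ (C⁻¹ i k))
      (∑ k, (∏ l ∈ Finset.univ.erase k, x t l ^ (C⁻¹ i l)) •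
        ((x t k * ∑ j, A k j * ∏ l, x t l ^ B j l) *
          C⁻¹ i k * x t k ^ (C⁻¹ i k - 1))) t := by
    apply HasDerivAt.fun_finsetProd
    intro k _
    exact (hx t k).rpow_const (Or.inl (ne_of_gt (hpos t k)))
  convert hd using 1
  have hterm : ∀ k, (∏ l ∈ Finset.univ.erase k, x t l ^ (C⁻¹ i l)) •
        ((x t k * ∑ j, A k j * ∏ l, x t l ^ B j l) *
          C⁻¹ i k * x t k ^ (C⁻¹ i k - 1))
      = (∏ l, x t l ^ (C⁻¹ i l)) * (C⁻¹ i k * ∑ j, A k j * ∏ l, x t l ^ B j l) := by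
    intro k
    have h1 : x t k ^ (C⁻¹ i k - 1) * x t k = x t k ^ (C⁻¹ i k) := by
      rw [← Real.rpow_add_one (ne_of_gt (hpos t k))]; ring_nf
    have h2 : (∏ l ∈ Finset.univ.erase k, x t l ^ (C⁻¹ i l)) * x t k ^ (C⁻¹ i k)
        = ∏ l, x t l ^ (C⁻¹ i l) := Finset.prod_erase_mul _ _ (mem_univ k)
    simp only [smul_eq_mul]
    calc (∏ l ∈ Finset.univ.erase k, x t l ^ (C⁻¹ i l)) *
        ((x t k * ∑ j, A k j * ∏ l, x t l ^ B j l) *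
          C⁻¹ i k * x t k ^ (C⁻¹ i k - 1))
        = ((∏ l ∈ Finset.univ.erase k, x t l ^ (C⁻¹ i l)) * (x t k ^ (C⁻¹ i k - 1) * x t k)) *
          (C⁻¹ i k * ∑ j, A k j * ∏ l, x t l ^ B j l) := by ring
      _ = _ := by rw [h1, h2]
  rw [Finset.sum_congr rfl (fun k _ => hterm k), ← Finset.mul_sum]
  congr 1
  have hmono : ∀ j, (∏ k, (∏ l, x t l ^ (C⁻¹ k l)) ^ (B * C) j k) = ∏ l, x t l ^ B j l := by
    intro j
    have step1 : ∀ k, (∏ l, x t l ^ (C⁻¹ k l)) ^ (B * C) j k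
        = ∏ l, x t l ^ (C⁻¹ k l * (B * C) j k) := by
      intro k
      rw [← Real.finset_prod_rpow _ _ (fun l _ => (Real.rpow_pos_of_pos (hpos t l) _).le)]
      exact Finset.prod_congr rfl fun l _ => (Real.rpow_mul (hpos t l).le _ _).symm
    rw [Finset.prod_congr rfl (fun k _ => step1 k), Finset.prod_comm]
    refine Finset.prod_congr rfl fun l _ => ?_
    rw [← Real.rpow_sum_of_pos (hpos t l)]
    congr 1
    have : ∑ k, C⁻¹ k l * (B * C) j k = (B * C * C⁻¹) j l := by
      rw [Matrix.mul_apply]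
      exact Finset.sum_congr rfl fun k _ => mul_comm _ _
    rw [this, Matrix.mul_assoc, hCC, Matrix.mul_one]
  calc ∑ j, (C⁻¹ * A) i j * ∏ k, (∏ l, x t l ^ (C⁻¹ k l)) ^ (B * C) j k
      = ∑ j, (∑ k, C⁻¹ i k * A k j) * ∏ l, x t l ^ B j l := by
        exact Finset.sum_congr rfl fun j _ => by rw [hmono j, Matrix.mul_apply]
    _ = ∑ k, C⁻¹ i k * ∑ j, A k j * ∏ l, x t l ^ B j l := by
        simp only [Finset.sum_mul, Finset.mul_sum]
        rw [Finset.sum_comm]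
        exact Finset.sum_congr rfl fun k _ => Finset.sum_congr rfl fun j _ => by ring
    _ = _ := rfl
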